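/- For f₀(z) = (1, 0, 2z, 2z², z²) and g₀(z) = (0, 1, 0, z², 0) in ℂ⁵, the squared norm of the wedge product satisfies ‖f₀ ∧ g₀‖² = (1+|z|²)⁴, and hence ∂²/∂z∂z̄ log‖f₀ ∧ g₀‖² = 4/(1+|z|²)². -/

import Mathlib

open Complex Finset

/-- Wirtinger derivative ∂/∂z of a function ℂ → ℂ. -/
noncomputable def wdz (f : ℂ → ℂ) (z : ℂ) : ℂ :=
  (fderiv ℝ f z 1 - Complex.I * fderiv ℝ f z Complex.I) / 2

/-- Wirtinger derivative ∂/∂z̄ of a function ℂ → ℂ. -/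
noncomputable def wdzbar (f : ℂ → ℂ) (z : ℂ) : ℂ :=
  (fderiv ℝ f z 1 + Complex.I * fderiv ℝ f z Complex.I) / 2

/-- Square norm of the wedge of two vectors in ℂ⁵ (Cauchy–Binet):
`‖f ∧ g‖² = ‖f‖²‖g‖² − |⟨f,g⟩|²`. -/
noncomputable def wedgeNormSq (f g : Fin 5 → ℂ) : ℝ :=
  (∑ i, Complex.normSq (f i)) * (∑ i, Complex.normSq (g i)) -
    Complex.normSq (∑ i, f i * (starRingEnd ℂ) (g i))

lemma hasFDerivAt_normSq (z : ℂ) :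
    HasFDerivAt Complex.normSq
      (((2*z.re) • Complex.reCLM + (2*z.im) • Complex.imCLM : ℂ →L[ℝ] ℝ)) z := by
  have h : (Complex.normSq : ℂ → ℝ) = fun w => w.re*w.re + w.im*w.im := by
    funext w; simp [Complex.normSq_apply]
  rw [h]
  have h1 := (Complex.reCLM.hasFDerivAt (x := z)).mul (Complex.reCLM.hasFDerivAt (x := z))
  have h2 := (Complex.imCLM.hasFDerivAt (x := z)).mul (Complex.imCLM.hasFDerivAt (x := z))
  convert h1.add h2 using 1
  all_goals try rfl
  ext v <;> (simp <;> ring)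

lemma ns_pos (z : ℂ) : (0:ℝ) < 1 + Complex.normSq z := by
  have := Complex.normSq_nonneg z; linarith

lemma hasFDerivAt_one_add_normSq (z : ℂ) :
    HasFDerivAt (fun w => 1 + Complex.normSq w)
      (((2*z.re) • Complex.reCLM + (2*z.im) • Complex.imCLM : ℂ →L[ℝ] ℝ)) z :=
  (hasFDerivAt_normSq z).const_add 1

lemma wdz_F (z : ℂ) :
    wdz (fun w => ((4 * Real.log (1 + Complex.normSq w) : ℝ) : ℂ)) z
      = 4 * ((starRingEnd ℂ) z) * (((1 + Complex.normSq z : ℝ) : ℂ))⁻¹ := by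
  have h0 := hasFDerivAt_one_add_normSq z
  have hlog := h0.log (ne_of_gt (ns_pos z))
  have hmul := hlog.const_mul (4:ℝ)
  have hC := (Complex.ofRealCLM.hasFDerivAt).comp z hmul
  have hfd : fderiv ℝ (fun w => ((4 * Real.log (1 + Complex.normSq w) : ℝ) : ℂ)) z
      = _ := hC.fderiv
  rw [wdz, hfd]
  have hne : ((1 + Complex.normSq z : ℝ) : ℂ) ≠ 0 := by
    exact_mod_cast (ne_of_gt (ns_pos z))
  rw [show (starRingEnd ℂ) z = (z.re:ℂ) - z.im * I from by
    simp [Complex.ext_iff]]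
  simp [ContinuousLinearMap.smul_apply, Complex.ofReal_mul, Complex.ofReal_inv]
  field_simp

lemma wdzbar_G (z : ℂ) :
    wdzbar (fun w => 4 * ((starRingEnd ℂ) w) * (((1 + Complex.normSq w : ℝ) : ℂ))⁻¹) z
      = ((4 / (1 + Complex.normSq z) ^ 2 : ℝ) : ℂ) := by
  have hconj : HasFDerivAt (fun w : ℂ => (starRingEnd ℂ) w)
      (Complex.conjCLE.toContinuousLinearMap) z := Complex.conjCLE.hasFDerivAt
  have h1 := hconj.const_mul (4:ℂ)
  have hinv := (hasFDerivAt_inv (ne_of_gt (ns_pos z))).comp z (hasFDerivAt_one_add_normSq z)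
  have h2 := (Complex.ofRealCLM.hasFDerivAt).comp z hinv
  have h := h1.mul h2
  simp only [Function.comp_def, Complex.ofRealCLM_apply, Complex.ofReal_inv, Pi.mul_def] at h
  rw [wdzbar, h.fderiv]
  have hne : ((1 + Complex.normSq z : ℝ) : ℂ) ≠ 0 := by
    exact_mod_cast (ne_of_gt (ns_pos z))
  rw [show (starRingEnd ℂ) z = (z.re:ℂ) - z.im * I from by simp [Complex.ext_iff]]
  simp [ContinuousLinearMap.smul_apply, Complex.ofReal_mul, Complex.ofReal_inv,
    Complex.normSq_apply]
  field_simp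
  ring_nf
  simp only [Complex.I_sq]
  ring_nf

/-- For `f₀ = (1,0,2z,2z²,z²)` and `g₀ = (0,1,0,z²,0)`:
`‖f₀∧g₀‖² = (1+|z|²)⁴` and `∂²/∂z∂z̄ log‖f₀∧g₀‖² = 4/(1+|z|²)²`. -/
theorem wedge_norm_and_gamma0 :
    let f₀ : ℂ → Fin 5 → ℂ := fun z => ![1, 0, 2 * z, 2 * z ^ 2, z ^ 2]
    let g₀ : ℂ → Fin 5 → ℂ := fun z => ![0, 1, 0, z ^ 2, 0]
    (∀ z : ℂ, wedgeNormSq (f₀ z) (g₀ z) = (1 + Complex.normSq z) ^ 4) ∧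
    (∀ z : ℂ,
      wdzbar (wdz (fun w => (Real.log (wedgeNormSq (f₀ w) (g₀ w)) : ℂ))) z =
        ((4 / (1 + Complex.normSq z) ^ 2 : ℝ) : ℂ)) := by
  intro f₀ g₀
  have key : ∀ z : ℂ, wedgeNormSq (f₀ z) (g₀ z) = (1 + Complex.normSq z) ^ 4 := by
    intro z
    simp only [wedgeNormSq, f₀, g₀]
    simp [Fin.sum_univ_five, Complex.normSq_mul, map_pow]
    ring
  refine ⟨key, ?_⟩
  intro z
  have hfun : (fun w => ((Real.log (wedgeNormSq (f₀ w) (g₀ w)) : ℝ) : ℂ))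
      = fun w => ((4 * Real.log (1 + Complex.normSq w) : ℝ) : ℂ) := by
    funext w
    rw [key w, Real.log_pow]
    push_cast; ring
  rw [hfun]
  have hG : wdz (fun w => ((4 * Real.log (1 + Complex.normSq w) : ℝ) : ℂ))
      = fun w => 4 * ((starRingEnd ℂ) w) * (((1 + Complex.normSq w : ℝ) : ℂ))⁻¹ :=
    funext wdz_F
  rw [hG]
  exact wdzbar_G z
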